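/- Let H be a d×d real matrix and let (g_i)_{i≥0} be a family of affine maps g_i : ℝ^d → ℝ^d all with the same linear part, i.e. g_i(θ) = Hθ + b_i for vectors b_i ∈ ℝ^d. For t ≥ 1 define the running average \bar g_t(θ) = (1/(t+1)) ∑_{i=0}^{t} g_i(θ). Then for any points θ_{t-1}, θ_t ∈ ℝ^d and any t ≥ 1, \bar g_t(θ_t) = (t/(t+1)) · \bar g_{t-1}(θ_{t-1}) + (1/(t+1)) · g_t(θ_t + t(θ_t − θ_{t-1})). -/

import Mathlib

/-- **Implicit gradient transport identity.** If all component gradients are affine maps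
`g i θ = H θ + b i` with the same linear part `H`, then the running average
`ḡ t θ = (1/(t+1)) ∑_{i=0}^t g i θ` satisfies, for `t ≥ 1` and any points `θprev, θcur`,
`ḡ t θcur = (t/(t+1)) ḡ (t-1) θprev + (1/(t+1)) g t (θcur + t (θcur - θprev))`. -/
theorem igt_transport_identity {d : ℕ} (H : Matrix (Fin d) (Fin d) ℝ)
    (b : ℕ → Fin d → ℝ) (g : ℕ → (Fin d → ℝ) → (Fin d → ℝ))
    (hg : ∀ i θ, g i θ = H.mulVec θ + b i)
    (gbar : ℕ → (Fin d → ℝ) → (Fin d → ℝ))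
    (hbar : ∀ t θ, gbar t θ = (1 / ((t : ℝ) + 1)) • ∑ i ∈ Finset.range (t + 1), g i θ)
    (t : ℕ) (ht : 1 ≤ t) (θprev θcur : Fin d → ℝ) :
    gbar t θcur = ((t : ℝ) / ((t : ℝ) + 1)) • gbar (t - 1) θprev
      + (1 / ((t : ℝ) + 1)) • g t (θcur + (t : ℝ) • (θcur - θprev)) := by
  obtain ⟨s, rfl⟩ : ∃ s, t = s + 1 := ⟨t - 1, (Nat.succ_pred_eq_of_pos ht).symm⟩
  simp only [hbar, hg, Nat.add_sub_cancel, Finset.sum_add_distrib, Finset.sum_const,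
    Finset.card_range, Finset.sum_range_succ, Matrix.mulVec_add, Matrix.mulVec_smul, Matrix.mulVec_sub]
  funext x
  have hs : (s : ℝ) + 1 ≠ 0 := by positivity
  have hs2 : (s : ℝ) + 1 + 1 ≠ 0 := by positivity
  simp only [Pi.add_apply, Pi.smul_apply, Pi.sub_apply, Finset.sum_apply, smul_eq_mul,
    Nat.cast_add, Nat.cast_one, nsmul_eq_mul, Pi.mul_apply, Pi.natCast_apply, Pi.ofNat_apply]
  field_simp
  ring
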